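/- A torsion free virtually cyclic group is either trivial or infinite cyclic. -/

import Mathlib

/-- The removed Mathlib definition `Monoid.IsTorsionFree`, with its old meaning. -/
def Monoid.IsTorsionFree (G : Type*) [Monoid G] : Prop :=
  ∀ g : G, g ≠ 1 → ¬IsOfFinOrder g

/-- An infinite cyclic torsion-free group is isomorphic to `Multiplicative ℤ`. -/
lemma aux_cyclic_equiv_int (K : Type*) [Group K] [IsCyclic K] [Infinite K]
    (htf : Monoid.IsTorsionFree K) : Nonempty (K ≃* Multiplicative ℤ) := by
  obtain ⟨g, hg⟩ := IsCyclic.exists_generator (α := K)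
  have hg1 : g ≠ 1 := by
    rintro rfl
    haveI : Subsingleton K := ⟨fun x y => by
      obtain ⟨m, hm⟩ := hg x
      obtain ⟨n, hn⟩ := hg y
      simp only at hm hn
      rw [← hm, ← hn, one_zpow, one_zpow]⟩
    exact not_finite K
  have hfo : ¬IsOfFinOrder g := htf g hg1
  have hzinj : Function.Injective fun k : ℤ => g ^ k :=
    injective_zpow_iff_not_isOfFinOrder.mpr hfo
  have hinj : Function.Injective (zpowersHom K g) := by
    intro m n h
    rw [zpowersHom_apply, zpowersHom_apply] at h
    exact Multiplicative.toAdd.injective (hzinj h)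
  have hsurj : Function.Surjective (zpowersHom K g) := by
    intro x
    obtain ⟨k, hk⟩ := Subgroup.mem_zpowers_iff.mp (hg x)
    exact ⟨Multiplicative.ofAdd k, by rw [zpowersHom_apply]; simpa using hk⟩
  exact ⟨(MulEquiv.ofBijective (zpowersHom K g) ⟨hinj, hsurj⟩).symm⟩

lemma aux_isCyclic_of_injective {K L : Type*} [Group K] [Group L] [IsCyclic L]
    (f : K →* L) (hf : Function.Injective f) : IsCyclic K :=
  isCyclic_of_surjective (MonoidHom.ofInjective hf).symm
    (MonoidHom.ofInjective hf).symm.surjective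

/-- A torsion free virtually cyclic group is either trivial or infinite cyclic. -/
theorem torsionfree_virtually_cyclic (G : Type*) [Group G]
    (hvc : ∃ H : Subgroup G, IsCyclic H ∧ H.FiniteIndex)
    (htf : Monoid.IsTorsionFree G) :
    Subsingleton G ∨ Nonempty (G ≃* Multiplicative ℤ) := by
  cases finite_or_infinite G with
  | inl hfin =>
    left
    haveI := hfin
    refine ⟨fun x y => ?_⟩
    have h1 : ∀ z : G, z = 1 := by
      intro z
      by_contra hz
      exact htf z hz (isOfFinOrder_of_finite z)
    rw [h1 x, h1 y]
  | inr hinf =>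
    right
    obtain ⟨H, hHc, hHf⟩ := hvc
    haveI := hHc
    haveI := hHf
    set N := H.normalCore with hN
    haveI hNnorm : N.Normal := H.normalCore_normal
    haveI hNfi : N.FiniteIndex := Subgroup.finiteIndex_normalCore H
    haveI : IsCyclic N := Subgroup.isCyclic_of_le H.normalCore_le
    haveI hNinf : Infinite N := by
      by_contra h
      rw [not_infinite_iff_finite] at h
      have hcard : Nat.card N * N.index = Nat.card G := N.card_mul_index
      have hne : Nat.card G ≠ 0 :=
        hcard ▸ Nat.mul_ne_zero Nat.card_pos.ne' hNfi.index_ne_zero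
      haveI := Nat.finite_of_card_ne_zero hne
      exact not_finite G
    obtain ⟨⟨a, haN⟩, ha⟩ := IsCyclic.exists_generator (α := N)
    have hmem : ∀ x ∈ N, ∃ k : ℤ, a ^ k = x := by
      intro x hx
      obtain ⟨k, hk⟩ := Subgroup.mem_zpowers_iff.mp (ha ⟨x, hx⟩)
      exact ⟨k, by simpa [Subtype.ext_iff] using hk⟩
    have ha1 : a ≠ 1 := by
      rintro rfl
      haveI : Subsingleton N := ⟨fun x y => by
        obtain ⟨m, hm⟩ := hmem x x.2
        obtain ⟨n, hn⟩ := hmem y y.2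
        apply Subtype.ext
        rw [← hm, ← hn, one_zpow, one_zpow]⟩
      exact not_finite N
    have hafo : ¬IsOfFinOrder a := htf a ha1
    have hzinj : Function.Injective fun k : ℤ => a ^ k :=
      injective_zpow_iff_not_isOfFinOrder.mpr hafo
    -- key step: a is central
    have hcent : ∀ t : G, Commute t a := by
      intro t
      have h1 : t * a * t⁻¹ ∈ N := hNnorm.conj_mem a haN t
      obtain ⟨k, hk⟩ := hmem _ h1
      have h2 : t⁻¹ * a * t ∈ N := by
        have := hNnorm.conj_mem a haN t⁻¹
        simpa using this
      obtain ⟨j, hj⟩ := hmem _ h2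
      have key : a ^ (j * k) = a ^ (1 : ℤ) := by
        calc a ^ (j * k) = (a ^ j) ^ k := by rw [zpow_mul]
        _ = (t⁻¹ * a * t) ^ k := by rw [hj]
        _ = t⁻¹ * a ^ k * t := by
            have h3 : (t⁻¹ * a * (t⁻¹)⁻¹) ^ k = t⁻¹ * a ^ k * (t⁻¹)⁻¹ := conj_zpow
            simpa using h3
        _ = t⁻¹ * (t * a * t⁻¹) * t := by rw [hk]
        _ = a ^ (1 : ℤ) := by group
      have hjk : j * k = 1 := hzinj key
      rcases Int.isUnit_iff.mp (IsUnit.of_mul_eq_one (a := k) j (by rw [mul_comm]; exact hjk)) with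
        hk1 | hk1
      · subst hk1
        rw [zpow_one] at hk
        have hk' : t * a * t⁻¹ = a := hk.symm
        rw [mul_inv_eq_iff_eq_mul] at hk'
        exact hk'
      · exfalso
        subst hk1
        have hconj : t * a * t⁻¹ = a⁻¹ := by rw [← hk, zpow_neg, zpow_one]
        obtain ⟨n, hn0, -, hnN⟩ :=
          Subgroup.exists_pow_mem_of_index_ne_zero hNfi.index_ne_zero (t * t)
        obtain ⟨k', hk'⟩ := hmem _ hnN
        have hcomm : t * (t * t) ^ n * t⁻¹ = (t * t) ^ n := by
          have hc : Commute t ((t * t) ^ n) :=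
            ((Commute.refl t).mul_right (Commute.refl t)).pow_right n
          rw [hc.eq]; group
        have hconjpow : t * a ^ k' * t⁻¹ = a ^ (-k') := by
          have h3 : (t * a * t⁻¹) ^ k' = t * a ^ k' * t⁻¹ := conj_zpow
          rw [← h3, hconj, ← zpow_neg_one, ← zpow_mul]
          ring_nf
        have heq : a ^ (-k') = a ^ k' := by
          rw [← hconjpow, hk', hcomm, ← hk']
        have hk'0 : k' = 0 := by
          have := hzinj heq
          omega
        rw [hk'0, zpow_zero] at hk'
        have htt : t * t = 1 := by
          by_contra htt
          exact htf (t * t) htt (isOfFinOrder_iff_pow_eq_one.mpr ⟨n, hn0, hk'.symm⟩)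
        have ht1 : t = 1 := by
          by_contra ht
          exact htf t ht (isOfFinOrder_iff_pow_eq_one.mpr ⟨2, two_pos, by rw [pow_two]; exact htt⟩)
        rw [ht1] at hconj
        simp only [one_mul, inv_one, mul_one] at hconj
        have haa : a * a = 1 := by nth_rewrite 2 [hconj]; simp
        exact hafo (isOfFinOrder_iff_pow_eq_one.mpr ⟨2, two_pos, by rw [pow_two]; exact haa⟩)
    have hNle : N ≤ Subgroup.center G := by
      intro x hx
      rw [Subgroup.mem_center_iff]
      intro g
      obtain ⟨k, hk⟩ := hmem x hx
      rw [← hk]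
      exact ((hcent g).zpow_right k).eq
    haveI : (Subgroup.center G).FiniteIndex := Subgroup.finiteIndex_of_le hNle
    -- transfer homomorphism G →* center G, injective by torsion-freeness
    have hφ1 : Function.Injective (MonoidHom.transferCenterPow G) := by
      rw [injective_iff_map_eq_one]
      intro g hg
      have hgpow : g ^ (Subgroup.center G).index = 1 := by
        have := congrArg Subtype.val hg
        rwa [MonoidHom.transferCenterPow_apply] at this
      by_contra hg1
      exact htf g hg1 (isOfFinOrder_iff_pow_eq_one.mpr
        ⟨(Subgroup.center G).index,
          Nat.pos_of_ne_zero Subgroup.FiniteIndex.index_ne_zero, hgpow⟩)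
    set A := Subgroup.center G with hA
    set N' := N.subgroupOf A with hN'
    haveI : N'.FiniteIndex := Subgroup.instFiniteIndex_subgroupOf N A
    -- power map A →* N', injective by torsion-freeness
    letI : CommGroup A :=
      { A.toGroup with mul_comm := fun x y => Subtype.ext (Subgroup.mem_center_iff.mp y.2 x) }
    set φ2 : A →* N' :=
      (powMonoidHom N'.index : A →* A).codRestrict N' (fun x => N'.pow_index_mem x) with hφ2def
    have hφ2 : Function.Injective φ2 := by
      rw [injective_iff_map_eq_one]
      intro x hx
      have hx' : ((x : G)) ^ N'.index = 1 := by
        have h4 := congrArg (fun y : N' => ((y : A) : G)) hx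
        simpa [hφ2def, powMonoidHom] using h4
      by_contra hx1
      have hxne : (x : G) ≠ 1 := fun h => hx1 (by
        apply Subtype.ext; exact h)
      exact htf (x : G) hxne (isOfFinOrder_iff_pow_eq_one.mpr
        ⟨N'.index, Nat.pos_of_ne_zero Subgroup.FiniteIndex.index_ne_zero, hx'⟩)
    set φ3 : N' ≃* N := Subgroup.subgroupOfEquivOfLe hNle with hφ3def
    -- N is infinite cyclic torsion-free, hence ≃* Multiplicative ℤ
    have htfN : Monoid.IsTorsionFree N := by
      intro x hx hfo
      obtain ⟨n, hn0, hxn⟩ := isOfFinOrder_iff_pow_eq_one.mp hfo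
      have hxn' : (x : G) ^ n = 1 := by
        have := congrArg (Subtype.val (p := (· ∈ N))) hxn
        simpa using this
      exact htf (x : G) (fun h => hx (Subtype.ext h))
        (isOfFinOrder_iff_pow_eq_one.mpr ⟨n, hn0, hxn'⟩)
    obtain ⟨e⟩ := aux_cyclic_equiv_int N htfN
    have hψ : Function.Injective
        (e.toMonoidHom.comp (φ3.toMonoidHom.comp (φ2.comp (MonoidHom.transferCenterPow G)))) := by
      simp only [MonoidHom.coe_comp, MulEquiv.coe_toMonoidHom]
      exact e.injective.comp (φ3.injective.comp (hφ2.comp hφ1))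
    haveI : IsCyclic G := aux_isCyclic_of_injective _ hψ
    exact aux_cyclic_equiv_int G htf
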